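/- Let S be a symplectic Hilbert space, I a closed isotropic subspace, and L a Lagrangian subspace of S having a clean intersection with I (i.e., L ∩ I = {0} and L + I is closed). Let L_I denote the image of L ∩ I^♯ under the orthogonal projection onto S_I = I^♯ ∩ I^⊥. Then L_I = (L + I) ∩ S_I. -/

import Mathlib

open RealInnerProductSpace

variable {S : Type*} [NormedAddCommGroup S] [InnerProductSpace ℝ S] [CompleteSpace S]

/-- The symplectic annihilator of `W` with respect to the symplectic form
`ω u v = ⟪J u, v⟫`. -/
def sympAnn (J : S →ₗ[ℝ] S) (W : Submodule ℝ S) : Submodule ℝ S where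
  carrier := {v : S | ∀ u ∈ W, ⟪J u, v⟫ = 0}
  zero_mem' := by intro u _; simp
  add_mem' := by
    intro a b ha hb u hu
    rw [inner_add_right, ha u hu, hb u hu, add_zero]
  smul_mem' := by
    intro c a ha u hu
    rw [real_inner_smul_right, ha u hu, mul_zero]

/-- If `L` is a Lagrangian subspace having clean intersection with the closed
isotropic subspace `I`, then the image `L_I` of `L ∩ I^♯` under the orthogonal
projection onto `S_I = I^♯ ∩ I^⊥` equals `(L + I) ∩ S_I`.  (The orthogonal
projection of `u` onto the closed subspace `S_I` is characterized as the unique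
`v ∈ S_I` with `u - v ∈ S_I^⊥`.) -/
theorem statement13
    (J : S →ₗ[ℝ] S)
    (hiso : ∀ u v : S, ⟪J u, J v⟫ = ⟪u, v⟫)
    (hJ2 : ∀ u : S, J (J u) = -u)
    (I : Submodule ℝ S) (hIc : IsClosed (I : Set S))
    (hIiso : I ≤ sympAnn J I)
    (L : Submodule ℝ S) (hLc : IsClosed (L : Set S))
    (hLag : L = sympAnn J L)
    (hclean₁ : L ⊓ I = ⊥)
    (hclean₂ : IsClosed ((L ⊔ I : Submodule ℝ S) : Set S)) :
    {v : S | v ∈ sympAnn J I ⊓ Iᗮ ∧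
        ∃ u ∈ L ⊓ sympAnn J I, u - v ∈ (sympAnn J I ⊓ Iᗮ)ᗮ} =
      ((L ⊔ I : Submodule ℝ S) : Set S) ∩ ((sympAnn J I ⊓ Iᗮ : Submodule ℝ S) : Set S) := by
  haveI : CompleteSpace I := hIc.completeSpace_coe
  set A := sympAnn J I with hA
  set SI := A ⊓ Iᗮ with hSI
  -- I is orthogonal to SI
  have hI_SIperp : I ≤ SIᗮ := by
    intro i hi
    rw [Submodule.mem_orthogonal]
    intro s hs
    have : ⟪i, s⟫ = 0 := hs.2 i hi
    rwa [real_inner_comm] at this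
  ext v
  constructor
  · rintro ⟨hvSI, u, huLA, huv⟩
    refine ⟨?_, hvSI⟩
    -- u - v ∈ A and u - v ∈ SIᗮ; show u - v ∈ I
    have hwA : u - v ∈ A := Submodule.sub_mem A huLA.2 hvSI.1
    set w := u - v with hw
    set p : I := I.orthogonalProjectionOnto w with hp
    have hdiff : w - (p : S) ∈ Iᗮ := Submodule.sub_starProjection_mem_orthogonal (K := I) w
    have hdiffA : w - (p : S) ∈ A := Submodule.sub_mem A hwA (hIiso p.2)
    have hdiffSI : w - (p : S) ∈ SI := ⟨hdiffA, hdiff⟩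
    have hdiffperp : w - (p : S) ∈ SIᗮ :=
      Submodule.sub_mem SIᗮ huv (hI_SIperp p.2)
    have hzero : w - (p : S) = 0 := by
      have := (Submodule.mem_orthogonal SI (w - (p : S))).mp hdiffperp
        (w - (p : S)) hdiffSI
      exact inner_self_eq_zero.mp this
    have hwI : w ∈ I := by
      have : w = (p : S) := sub_eq_zero.mp hzero
      rw [this]; exact p.2
    -- v = u - w ∈ L ⊔ I
    have : v = u - w := by simp [hw]
    rw [this]
    exact Submodule.sub_mem _ (Submodule.mem_sup_left huLA.1)
      (Submodule.mem_sup_right hwI)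
  · rintro ⟨hvLI, hvSI⟩
    refine ⟨hvSI, ?_⟩
    obtain ⟨l, hl, i, hi, hli⟩ := Submodule.mem_sup.mp hvLI
    refine ⟨l, ⟨hl, ?_⟩, ?_⟩
    · have : l = v - i := by rw [← hli]; abel
      rw [this]
      exact Submodule.sub_mem A hvSI.1 (hIiso hi)
    · have : l - v = -i := by rw [← hli]; abel
      rw [this]
      exact Submodule.neg_mem _ (hI_SIperp hi)
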